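/- Let V be a nonempty finite set and let s ≥ 2 be an integer. Let G : V^s → ℝ and let ⟨G^{(k)}_ω : k ∈ {1,2}, ω ∈ [2]^s∖{1^s}⟩ be a family of real-valued functions on V^s. Identifying V^{s×2} with V^s × V^s (so each x ∈ V^{s×2} is written as x = (y,z) with y,z ∈ V^s), set I := 𝔼[ G(y) · ∏_{k∈{1,2}} ∏_{ω∈[2]^s∖{1^s}} G^{(k)}_ω(π_ω(y,z_k)) | y, z_1, z_2 ∈ V^s ]. Then |I| ≤ ‖G‖_{□_4(V^s)} · ∏_{k∈{1,2}} ∏_{ω∈[2]^s∖{1^s}} ‖G^{(k)}_ω‖_{□_4(V^s)}. -/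

import Mathlib

open Finset

/-- The average of a real-valued function on a finite type. -/
noncomputable def avg (α : Type*) [Fintype α] (f : α → ℝ) : ℝ :=
  (∑ x, f x) / (Fintype.card α : ℝ)

/-- The `ℓ`-box norm `‖F‖_{□_ℓ(V^s)}` of `F : V^s → ℝ`.  Here `V^{s×ℓ}` is modelled as
`Fin s → Fin ℓ → V`, an element `ω ∈ [ℓ]^s` as `ω : Fin s → Fin ℓ`, and the projection
`π_ω : V^{s×ℓ} → V^s` sends `x` to `fun i => x i (ω i)`.  The box norm `‖F‖_{□(V^s)}`
is the case `ℓ = 2`. -/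
noncomputable def boxNorm (V : Type*) [Fintype V] (s ℓ : ℕ) (F : (Fin s → V) → ℝ) : ℝ :=
  (avg (Fin s → Fin ℓ → V) fun x =>
      ∏ ω : Fin s → Fin ℓ, F fun i => x i (ω i)) ^ (((ℓ : ℝ) ^ s)⁻¹)

/-- The cut norm `‖F‖_{cut(V^s)}` of `F : V^s → ℝ`; the distinguished element `1^s` of
`[2]^s` is modelled as `fun _ => (0 : Fin 2)`. -/
noncomputable def cutNorm (V : Type*) [Fintype V] (s : ℕ) (F : (Fin s → V) → ℝ) : ℝ :=
  sSup {r : ℝ | ∃ H : (Fin s → Fin 2) → (Fin s → V) → ℝ,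
    (∀ ω y, H ω y ∈ Set.Icc (-1 : ℝ) 1) ∧
    r = avg (Fin s → Fin 2 → V) fun x =>
      F (fun i => x i 0) *
        ∏ ω ∈ Finset.univ.filter (fun ω : Fin s → Fin 2 => ω ≠ fun _ => 0),
          H ω fun i => x i (ω i)}
section avglemmas
variable {α β : Type*} [Fintype α] [Nonempty α] [Fintype β] [Nonempty β]

lemma card_pos' (α : Type*) [Fintype α] [Nonempty α] : (0:ℝ) < (Fintype.card α : ℝ) := by
  exact_mod_cast Fintype.card_pos

lemma avg_nonneg' {f : α → ℝ} (h : ∀ a, 0 ≤ f a) : 0 ≤ avg α f :=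
  div_nonneg (Finset.sum_nonneg fun a _ => h a) (le_of_lt (card_pos' α))

lemma avg_mono {f g : α → ℝ} (h : ∀ a, f a ≤ g a) : avg α f ≤ avg α g :=
  (div_le_div_iff_of_pos_right (card_pos' α)).mpr (Finset.sum_le_sum fun a _ => h a)

lemma avg_const (c : ℝ) : avg α (fun _ => c) = c := by
  rw [avg, Finset.sum_const, Finset.card_univ, nsmul_eq_mul]
  field_simp

lemma abs_avg_le (f : α → ℝ) : |avg α f| ≤ avg α (fun a => |f a|) := by
  rw [avg, avg, abs_div, abs_of_nonneg (le_of_lt (card_pos' α))]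
  exact (div_le_div_iff_of_pos_right (card_pos' α)).mpr (Finset.abs_sum_le_sum_abs _ _)

lemma avg_equiv (e : β ≃ α) (f : α → ℝ) : avg α f = avg β (fun b => f (e b)) := by
  rw [avg, avg, Equiv.sum_comp e f, Fintype.card_congr e]

lemma avg_prod (f : α × β → ℝ) :
    avg (α × β) f = avg α (fun a => avg β (fun b => f (a, b))) := by
  rw [avg, Fintype.sum_prod_type, Fintype.card_prod]
  simp only [avg, Finset.sum_div]
  refine Finset.sum_congr rfl fun a _ => Finset.sum_congr rfl fun b _ => ?_
  push_cast
  rw [div_div, mul_comm]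

lemma avg_swap (g : α → β → ℝ) :
    avg α (fun a => avg β (fun b => g a b)) = avg β (fun b => avg α (fun a => g a b)) := by
  rw [← avg_prod (fun p => g p.1 p.2)]
  rw [avg_equiv (Equiv.prodComm β α) (fun p => g p.1 p.2)]
  simp [avg_prod]

lemma avg_sum {ι : Type*} (J : Finset ι) (g : ι → α → ℝ) :
    avg α (fun a => ∑ j ∈ J, g j a) = ∑ j ∈ J, avg α (g j) := by
  rw [avg, Finset.sum_comm, Finset.sum_div]
  rfl

lemma avg_const_mul (c : ℝ) (f : α → ℝ) : avg α (fun a => c * f a) = c * avg α f := by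
  rw [avg, avg, ← Finset.mul_sum, mul_div_assoc]

lemma avg_mul_const (c : ℝ) (f : α → ℝ) : avg α (fun a => f a * c) = avg α f * c := by
  simp only [mul_comm _ c, avg_const_mul]

lemma avg_unique {γ : Type*} [Fintype γ] [Unique γ] (f : γ → ℝ) : avg γ f = f default := by
  rw [avg, Fintype.card_unique, Fintype.sum_unique]
  simp

end avglemmas

section holder
variable {α : Type*} [Fintype α] [Nonempty α]

lemma holder_avg {ι : Type*} (J : Finset ι) (f : ι → α → ℝ) (hf : ∀ j ∈ J, ∀ a, 0 ≤ f j a) :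
    avg α (fun a => ∏ j ∈ J, f j a) ≤
      ∏ j ∈ J, (avg α fun a => f j a ^ J.card) ^ ((J.card : ℝ)⁻¹) := by
  rcases J.eq_empty_or_nonempty with rfl | hJ
  · simp [avg_const]
  have hn : 0 < J.card := Finset.card_pos.mpr hJ
  set n := J.card with hncard
  by_cases hM : ∀ j ∈ J, 0 < avg α (fun a => f j a ^ n)
  · -- main case
    set M : ι → ℝ := fun j => avg α (fun a => f j a ^ n) with hMdef
    have key : ∀ a, ∏ j ∈ J, f j a ≤
        (∏ j ∈ J, (M j) ^ ((n : ℝ)⁻¹)) * ∑ j ∈ J, (n : ℝ)⁻¹ * (f j a ^ n / M j) := by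
      intro a
      have hAM := Real.geom_mean_le_arith_mean_weighted J (fun _ => (n : ℝ)⁻¹)
        (fun j => f j a ^ n / M j) (fun _ _ => inv_nonneg.mpr (Nat.cast_nonneg _))
        (by rw [Finset.sum_const, nsmul_eq_mul,
          mul_inv_cancel₀ (Nat.cast_ne_zero.mpr hn.ne')])
        (fun j hj => div_nonneg (pow_nonneg (hf j hj a) _) (hM j hj).le)
      have hprod : ∏ j ∈ J, (f j a ^ n / M j) ^ ((n:ℝ)⁻¹)
          = (∏ j ∈ J, f j a) / ∏ j ∈ J, (M j) ^ ((n : ℝ)⁻¹) := by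
        rw [← Finset.prod_div_distrib]
        refine Finset.prod_congr rfl fun j hj => ?_
        rw [Real.div_rpow (pow_nonneg (hf j hj a) _) (le_of_lt (hM j hj))]
        congr 1
        rw [← Real.rpow_natCast (f j a) n, ← Real.rpow_mul (hf j hj a),
          mul_inv_cancel₀ (Nat.cast_ne_zero.mpr hn.ne'), Real.rpow_one]
      rw [hprod] at hAM
      rw [div_le_iff₀ (Finset.prod_pos fun j hj =>
        Real.rpow_pos_of_pos (hM j hj) _)] at hAM
      calc ∏ j ∈ J, f j a ≤ (∑ j ∈ J, (n:ℝ)⁻¹ * (f j a ^ n / M j)) * ∏ j ∈ J, M j ^ ((n:ℝ)⁻¹) := hAM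
        _ = _ := by ring
    calc avg α (fun a => ∏ j ∈ J, f j a)
        ≤ avg α (fun a => (∏ j ∈ J, (M j) ^ ((n : ℝ)⁻¹)) *
            ∑ j ∈ J, (n : ℝ)⁻¹ * (f j a ^ n / M j)) := avg_mono key
      _ = (∏ j ∈ J, (M j) ^ ((n : ℝ)⁻¹)) *
            ∑ j ∈ J, (n : ℝ)⁻¹ * (avg α (fun a => f j a ^ n) / M j) := by
          rw [avg_const_mul]
          congr 1
          rw [avg_sum]
          refine Finset.sum_congr rfl fun j hj => ?_
          rw [avg_const_mul]
          congr 1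
          simp only [div_eq_mul_inv]
          rw [avg_mul_const]
      _ = ∏ j ∈ J, (M j) ^ ((n : ℝ)⁻¹) := by
          have : ∀ j ∈ J, (n : ℝ)⁻¹ * (avg α (fun a => f j a ^ n) / M j) = (n:ℝ)⁻¹ := by
            intro j hj
            show (n:ℝ)⁻¹ * (M j / M j) = (n:ℝ)⁻¹
            rw [div_self (ne_of_gt (hM j hj)), mul_one]
          rw [Finset.sum_congr rfl this, Finset.sum_const, nsmul_eq_mul,
            mul_inv_cancel₀ (Nat.cast_ne_zero.mpr hn.ne'), mul_one]
  · -- degenerate case: some M j = 0, so f j ≡ 0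
    push_neg at hM
    obtain ⟨j₀, hj₀, hM0⟩ := hM
    have hMz : avg α (fun a => f j₀ a ^ n) = 0 :=
      le_antisymm hM0 (avg_nonneg' fun a => pow_nonneg (hf j₀ hj₀ a) _)
    have hz : ∀ a, f j₀ a = 0 := by
      intro a
      have hsum : ∑ a, f j₀ a ^ n = 0 := by
        have := hMz
        rw [avg, div_eq_zero_iff] at this
        rcases this with h | h
        · exact h
        · exact absurd h (ne_of_gt (card_pos' α))
      have := (Finset.sum_eq_zero_iff_of_nonneg
        (fun a _ => pow_nonneg (hf j₀ hj₀ a) _)).mp hsum a (Finset.mem_univ a)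
      exact pow_eq_zero_iff hn.ne' |>.mp this
    have hLHS : avg α (fun a => ∏ j ∈ J, f j a) = 0 := by
      have : ∀ a, ∏ j ∈ J, f j a = 0 := fun a => Finset.prod_eq_zero hj₀ (hz a)
      simp only [this]
      exact avg_const 0
    rw [hLHS]
    exact Finset.prod_nonneg fun j hj =>
      Real.rpow_nonneg (avg_nonneg' fun a => pow_nonneg (hf j hj a) _) _
end holder

section structural
variable {β : Type*} [Fintype β] [Nonempty β]

lemma avg_cons {m : ℕ} (f : (Fin (m+1) → β) → ℝ) :
    avg (Fin (m+1) → β) f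
      = avg β (fun b => avg (Fin m → β) (fun g => f (Fin.cons b g))) := by
  rw [avg_equiv (Fin.consEquiv (fun _ => β)) f, avg_prod]
  rfl

lemma prod_cons_index {m : ℕ} {γ : Type*} [Fintype γ] {M : Type*} [CommMonoid M]
    (h : (Fin (m+1) → γ) → M) :
    ∏ ω : Fin (m+1) → γ, h ω = ∏ a : γ, ∏ ω' : Fin m → γ, h (Fin.cons a ω') := by
  calc ∏ ω : Fin (m+1) → γ, h ω
      = ∏ p : γ × (Fin m → γ), h (Fin.cons p.1 p.2) :=
        (Fintype.prod_equiv (Fin.consEquiv (fun _ => γ)) _ _ (fun p => rfl)).symm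
    _ = ∏ a : γ, ∏ ω' : Fin m → γ, h (Fin.cons a ω') :=
        Fintype.prod_prod_type _

lemma proj_cons {V : Type*} {m : ℕ} (x₀ : Fin 4 → V) (x' : Fin m → Fin 4 → V)
    (a : Fin 4) (ω' : Fin m → Fin 4) :
    (fun i => (Fin.cons x₀ x' : Fin (m+1) → Fin 4 → V) i
        ((Fin.cons a ω' : Fin (m+1) → Fin 4) i))
      = Fin.cons (x₀ a) (fun i => x' i (ω' i)) := by
  funext i
  refine Fin.cases ?_ (fun j => ?_) i <;> simp

lemma avg_prod_indep {V : Type*} [Fintype V] [Nonempty V] :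
    ∀ (m : ℕ) (h : Fin m → V → ℝ),
    avg (Fin m → V) (fun x => ∏ a, h a (x a)) = ∏ a, avg V (h a) := by
  intro m
  induction m with
  | zero =>
    intro h
    simp only [Finset.univ_eq_empty, Finset.prod_empty]
    exact avg_const 1
  | succ m ih =>
    intro h
    rw [avg_cons (fun x => ∏ a, h a (x a))]
    have : ∀ (b : V), (avg (Fin m → V) fun g => ∏ a, h a ((Fin.cons b g : Fin (m+1) → V) a))
        = h 0 b * ∏ a : Fin m, avg V (h a.succ) := by
      intro b
      have e1 : ∀ g : Fin m → V, ∏ a, h a ((Fin.cons b g : Fin (m+1) → V) a)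
          = h 0 b * ∏ a : Fin m, h a.succ (g a) := by
        intro g
        rw [Fin.prod_univ_succ]
        simp
      simp only [e1]
      rw [avg_const_mul, ih (fun a => h a.succ)]
    simp only [this]
    rw [avg_mul_const, Fin.prod_univ_succ]

end structural

section core
variable {V : Type*} [Fintype V] [Nonempty V]

/-- grid average with one function per position -/
noncomputable def GP (V : Type*) [Fintype V] (s : ℕ)
    (F : (Fin s → Fin 4) → (Fin s → V) → ℝ) : ℝ :=
  avg (Fin s → Fin 4 → V) fun x => ∏ ω : Fin s → Fin 4, F ω (fun i => x i (ω i))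

/-- diagonal grid average -/
noncomputable def Dg (V : Type*) [Fintype V] (s : ℕ) (F : (Fin s → V) → ℝ) : ℝ :=
  GP V s (fun _ => F)

lemma GP_succ (n : ℕ) (F : (Fin (n+1) → Fin 4) → (Fin (n+1) → V) → ℝ) :
    GP V (n+1) F = avg (Fin 4 → V) (fun x₀ =>
      GP V n (fun ω' u => ∏ a : Fin 4, F (Fin.cons a ω') (Fin.cons (x₀ a) u))) := by
  rw [GP, avg_cons]
  refine congrArg _ (funext fun x₀ => ?_)
  rw [GP]
  refine congrArg _ (funext fun x' => ?_)
  rw [prod_cons_index (fun ω => F ω (fun i => (Fin.cons x₀ x' : Fin (n+1) → Fin 4 → V) i (ω i)))]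
  rw [Finset.prod_comm]
  refine Finset.prod_congr rfl fun ω' _ => Finset.prod_congr rfl fun a _ => ?_
  rw [proj_cons]

lemma Dg_split (n : ℕ) (Fc : (Fin (n+1) → V) → ℝ) :
    Dg V (n+1) Fc = avg (Fin n → Fin 4 → V) fun x' =>
      (avg V fun v => ∏ ω'' : Fin n → Fin 4,
        Fc (Fin.cons v (fun i => x' i (ω'' i)))) ^ 4 := by
  rw [Dg, GP_succ]
  calc avg (Fin 4 → V) (fun x₀ =>
        GP V n (fun ω' u => ∏ a : Fin 4, Fc (Fin.cons (x₀ a) u)))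
      = avg (Fin 4 → V) (fun x₀ => avg (Fin n → Fin 4 → V) fun x' =>
          ∏ a : Fin 4, ∏ ω'' : Fin n → Fin 4,
            Fc (Fin.cons (x₀ a) (fun i => x' i (ω'' i)))) := by
        refine congrArg _ (funext fun x₀ => ?_)
        rw [GP]
        exact congrArg _ (funext fun x' => Finset.prod_comm)
    _ = avg (Fin n → Fin 4 → V) (fun x' => avg (Fin 4 → V) fun x₀ =>
          ∏ a : Fin 4, ∏ ω'' : Fin n → Fin 4,
            Fc (Fin.cons (x₀ a) (fun i => x' i (ω'' i)))) := avg_swap _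
    _ = _ := by
        refine congrArg _ (funext fun x' => ?_)
        rw [avg_prod_indep 4 (fun _ v => ∏ ω'' : Fin n → Fin 4,
          Fc (Fin.cons v (fun i => x' i (ω'' i))))]
        rw [Finset.prod_const, Finset.card_univ, Fintype.card_fin]

lemma Dg_nonneg (n : ℕ) (Fc : (Fin (n+1) → V) → ℝ) : 0 ≤ Dg V (n+1) Fc := by
  rw [Dg_split]
  exact avg_nonneg' fun x' => by positivity

lemma rpow_pow_cancel {x : ℝ} (hx : 0 ≤ x) {m : ℕ} (hm : 0 < m) :
    (x ^ ((m : ℝ)⁻¹)) ^ m = x := by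
  rw [← Real.rpow_natCast (x ^ ((m:ℝ)⁻¹)) m, ← Real.rpow_mul hx,
    inv_mul_cancel₀ (Nat.cast_ne_zero.mpr hm.ne'), Real.rpow_one]

lemma quad_root_abs {x : ℝ} : (x ^ 4) ^ ((4:ℝ)⁻¹) = |x| := by
  have h1 : x ^ 4 = |x| ^ 4 := by
    rw [← abs_pow, abs_of_nonneg (by positivity)]
  rw [h1, ← Real.rpow_natCast |x| 4, ← Real.rpow_mul (abs_nonneg x)]
  norm_num

lemma GP_one (F : (Fin 1 → Fin 4) → (Fin 1 → V) → ℝ) :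
    GP V 1 F = ∏ a : Fin 4, avg V (fun v => F (fun _ => a) (fun _ => v)) := by
  rw [GP, avg_equiv (Equiv.funUnique (Fin 1) (Fin 4 → V)).symm]
  have h1 : ∀ x₀ : Fin 4 → V,
      (∏ ω : Fin 1 → Fin 4, F ω (fun i => ((Equiv.funUnique (Fin 1) (Fin 4 → V)).symm x₀) i (ω i)))
        = ∏ a : Fin 4, F (fun _ => a) (fun _ => x₀ a) := by
    intro x₀
    exact (Fintype.prod_equiv (Equiv.funUnique (Fin 1) (Fin 4)).symm _ _ (fun a => rfl)).symm
  simp only [h1]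
  exact avg_prod_indep 4 (fun a v => F (fun _ => a) (fun _ => v))

lemma Dg_one (Fc : (Fin 1 → V) → ℝ) :
    Dg V 1 Fc = (avg V (fun v => Fc (fun _ => v))) ^ 4 := by
  rw [Dg, GP_one, Finset.prod_const, Finset.card_univ, Fintype.card_fin]

end core

section gcs
variable {V : Type*} [Fintype V] [Nonempty V]

theorem gcs : ∀ s : ℕ, 1 ≤ s → ∀ F : (Fin s → Fin 4) → (Fin s → V) → ℝ,
    |GP V s F| ≤ ∏ ω : Fin s → Fin 4, (Dg V s (F ω)) ^ (((4:ℝ) ^ s)⁻¹) := by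
  intro s hs
  induction s, hs using Nat.le_induction with
  | base =>
    intro F
    rw [GP_one, Finset.abs_prod]
    have hD : ∀ ω : Fin 1 → Fin 4, (Dg V 1 (F ω)) ^ (((4:ℝ)^(1:ℕ))⁻¹)
        = |avg V fun v => F ω (fun _ => v)| := by
      intro ω
      rw [Dg_one, pow_one]
      exact quad_root_abs
    rw [Finset.prod_congr rfl (fun ω _ => hD ω)]
    exact le_of_eq (Fintype.prod_equiv (Equiv.funUnique (Fin 1) (Fin 4)).symm _ _ (fun a => rfl))
  | succ n hn ih =>
    intro F
    set K : (Fin 4 → V) → (Fin n → Fin 4) → (Fin n → V) → ℝ :=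
      fun x₀ ω' u => ∏ a : Fin 4, F (Fin.cons a ω') (Fin.cons (x₀ a) u) with hK
    have hDgK : ∀ (x₀ : Fin 4 → V) (ω' : Fin n → Fin 4), 0 ≤ Dg V n (K x₀ ω') := by
      intro x₀ ω'
      obtain ⟨m, hm⟩ : ∃ m, n = m + 1 := ⟨n - 1, by omega⟩
      subst hm
      exact Dg_nonneg m _
    -- step 1 : split off first row and apply IH
    have h1 : |GP V (n+1) F| ≤ avg (Fin 4 → V) fun x₀ =>
        ∏ ω' : Fin n → Fin 4, (Dg V n (K x₀ ω')) ^ (((4:ℝ)^n)⁻¹) := by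
      rw [GP_succ]
      exact (abs_avg_le _).trans (avg_mono fun x₀ => ih (K x₀))
    -- step 2 : Hölder in x₀
    have hcard : (univ : Finset (Fin n → Fin 4)).card = 4 ^ n := by
      rw [Finset.card_univ, Fintype.card_fun, Fintype.card_fin, Fintype.card_fin]
    have hcast : (((univ : Finset (Fin n → Fin 4)).card : ℝ)) = (4:ℝ) ^ n := by
      rw [hcard]; push_cast; ring
    have h2 : (avg (Fin 4 → V) fun x₀ =>
          ∏ ω' : Fin n → Fin 4, (Dg V n (K x₀ ω')) ^ (((4:ℝ)^n)⁻¹))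
        ≤ ∏ ω' : Fin n → Fin 4,
            (avg (Fin 4 → V) fun x₀ => Dg V n (K x₀ ω')) ^ (((4:ℝ)^n)⁻¹) := by
      have hh := holder_avg (univ : Finset (Fin n → Fin 4))
        (fun ω' x₀ => (Dg V n (K x₀ ω')) ^ (((4:ℝ)^n)⁻¹))
        (fun ω' _ x₀ => Real.rpow_nonneg (hDgK x₀ ω') _)
      have hcanc : ∀ (ω' : Fin n → Fin 4) (x₀ : Fin 4 → V),
          ((Dg V n (K x₀ ω')) ^ (((4:ℝ)^n)⁻¹)) ^ (univ : Finset (Fin n → Fin 4)).card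
            = Dg V n (K x₀ ω') := by
        intro ω' x₀
        rw [← hcast]
        exact rpow_pow_cancel (hDgK x₀ ω') (by rw [hcard]; positivity)
      simp only [hcanc, hcast] at hh
      exact hh
    -- step 3 : bound the diagonal-in-first-row averages
    have h3 : ∀ ω' : Fin n → Fin 4,
        (avg (Fin 4 → V) fun x₀ => Dg V n (K x₀ ω'))
          ≤ ∏ a : Fin 4, (Dg V (n+1) (F (Fin.cons a ω'))) ^ ((4:ℝ)⁻¹) := by
      intro ω'
      set φ : Fin 4 → (Fin n → Fin 4 → V) → ℝ := fun a x' =>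
        avg V fun v => ∏ ω'' : Fin n → Fin 4,
          F (Fin.cons a ω') (Fin.cons v (fun i => x' i (ω'' i))) with hφ
      have e1 : (avg (Fin 4 → V) fun x₀ => Dg V n (K x₀ ω'))
          = avg (Fin n → Fin 4 → V) fun x' => ∏ a : Fin 4, φ a x' := by
        have e11 : ∀ x₀ : Fin 4 → V, Dg V n (K x₀ ω')
            = avg (Fin n → Fin 4 → V) fun x' => ∏ a : Fin 4, ∏ ω'' : Fin n → Fin 4,
                F (Fin.cons a ω') (Fin.cons (x₀ a) (fun i => x' i (ω'' i))) := by
          intro x₀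
          rw [Dg, GP]
          exact congrArg _ (funext fun x' => Finset.prod_comm)
        simp only [e11]
        rw [avg_swap]
        refine congrArg _ (funext fun x' => ?_)
        exact avg_prod_indep 4 (fun a v => ∏ ω'' : Fin n → Fin 4,
          F (Fin.cons a ω') (Fin.cons v (fun i => x' i (ω'' i))))
      rw [e1]
      have e2 : (avg (Fin n → Fin 4 → V) fun x' => ∏ a : Fin 4, φ a x')
          ≤ avg (Fin n → Fin 4 → V) fun x' => ∏ a : Fin 4, |φ a x'| :=
        avg_mono fun x' => le_trans (le_abs_self _) (le_of_eq (Finset.abs_prod _ _))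
      have e3 := holder_avg (univ : Finset (Fin 4)) (fun a x' => |φ a x'|)
        (fun a _ x' => abs_nonneg _)
      have hc4 : (univ : Finset (Fin 4)).card = 4 := by simp
      have e4 : ∀ a : Fin 4,
          (avg (Fin n → Fin 4 → V) fun x' => |φ a x'| ^ (univ : Finset (Fin 4)).card)
            = Dg V (n+1) (F (Fin.cons a ω')) := by
        intro a
        rw [Dg_split]
        refine congrArg _ (funext fun x' => ?_)
        rw [hc4, ← abs_pow, abs_of_nonneg (by positivity : (0:ℝ) ≤ φ a x' ^ 4)]
      calc (avg (Fin n → Fin 4 → V) fun x' => ∏ a : Fin 4, φ a x')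
          ≤ avg (Fin n → Fin 4 → V) fun x' => ∏ a : Fin 4, |φ a x'| := e2
        _ ≤ ∏ a : Fin 4, (avg (Fin n → Fin 4 → V) fun x' => |φ a x'| ^
              (univ : Finset (Fin 4)).card) ^ (((univ : Finset (Fin 4)).card : ℝ)⁻¹) := e3
        _ = ∏ a : Fin 4, (Dg V (n+1) (F (Fin.cons a ω'))) ^ ((4:ℝ)⁻¹) := by
            refine Finset.prod_congr rfl fun a _ => ?_
            rw [e4 a, hc4]
            norm_num
    -- combine
    calc |GP V (n+1) F|
        ≤ avg (Fin 4 → V) (fun x₀ =>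
            ∏ ω' : Fin n → Fin 4, (Dg V n (K x₀ ω')) ^ (((4:ℝ)^n)⁻¹)) := h1
      _ ≤ ∏ ω' : Fin n → Fin 4,
            (avg (Fin 4 → V) fun x₀ => Dg V n (K x₀ ω')) ^ (((4:ℝ)^n)⁻¹) := h2
      _ ≤ ∏ ω' : Fin n → Fin 4,
            (∏ a : Fin 4, (Dg V (n+1) (F (Fin.cons a ω'))) ^ ((4:ℝ)⁻¹)) ^ (((4:ℝ)^n)⁻¹) := by
          refine Finset.prod_le_prod (fun ω' _ => Real.rpow_nonneg
            (avg_nonneg' fun x₀ => hDgK x₀ ω') _) (fun ω' _ => ?_)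
          exact Real.rpow_le_rpow (avg_nonneg' fun x₀ => hDgK x₀ ω') (h3 ω') (by positivity)
      _ = ∏ ω : Fin (n+1) → Fin 4, (Dg V (n+1) (F ω)) ^ (((4:ℝ) ^ (n+1))⁻¹) := by
          rw [prod_cons_index (fun ω => (Dg V (n+1) (F ω)) ^ (((4:ℝ) ^ (n+1))⁻¹)),
            Finset.prod_comm]
          refine Finset.prod_congr rfl fun ω' _ => ?_
          rw [← Real.finset_prod_rpow _ _ (fun a _ => Real.rpow_nonneg (Dg_nonneg _ _) _) _]
          refine Finset.prod_congr rfl fun a _ => ?_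
          rw [← Real.rpow_mul (Dg_nonneg _ _)]
          congr 1
          rw [pow_succ, mul_inv, mul_comm]
end gcs

section appl
variable {V : Type*} [Fintype V] [Nonempty V] {s : ℕ}

lemma boxNorm_eq (F : (Fin s → V) → ℝ) :
    boxNorm V s 4 F = (Dg V s F) ^ (((4:ℝ) ^ s)⁻¹) := by
  rw [boxNorm, Dg, GP]
  norm_num

lemma boxNorm_one : boxNorm V s 4 (fun _ => (1:ℝ)) = 1 := by
  rw [boxNorm]
  simp only [Finset.prod_const_one]
  rw [avg_const, Real.one_rpow]

/-- embedding of `[2]^s \ {0}` patterns into `[4]^s`, `k = 0 ↦` column 1, `k = 1 ↦` column 2 -/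
def emb (k : Fin 2) (ω : Fin s → Fin 2) : Fin s → Fin 4 :=
  fun i => if ω i = 0 then 0 else ⟨k.val + 1, by omega⟩

/-- retraction -/
def retr (ρ : Fin s → Fin 4) : Fin s → Fin 2 :=
  fun i => if ρ i = 0 then 0 else 1

def Pat (k : Fin 2) (ρ : Fin s → Fin 4) : Prop :=
  ρ ≠ (fun _ => 0) ∧ ∀ i, ρ i = 0 ∨ ρ i = ⟨k.val + 1, by omega⟩

instance (k : Fin 2) (ρ : Fin s → Fin 4) : Decidable (Pat k ρ) := by
  unfold Pat; infer_instance

lemma retr_emb (k : Fin 2) (ω : Fin s → Fin 2) : retr (emb k ω) = ω := by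
  funext i
  by_cases h : ω i = 0
  · simp [retr, emb, h]
  · have h1 : ω i = 1 := by omega
    simp only [retr, emb, h, if_false]
    rw [if_neg, h1]
    exact fun hc => absurd (congrArg Fin.val hc) (by simp only [Fin.val_mk, Fin.val_zero]; omega)

lemma pat_emb {k : Fin 2} {ω : Fin s → Fin 2} (hω : ω ≠ fun _ => 0) : Pat k (emb k ω) := by
  constructor
  · intro h
    apply hω
    funext i
    have := congrFun h i
    simp only [emb] at this
    by_cases h2 : ω i = 0
    · exact h2
    · rw [if_neg h2] at this
      exact absurd (congrArg Fin.val this) (by simp only [Fin.val_mk, Fin.val_zero]; omega)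
  · intro i
    by_cases h2 : ω i = 0
    · left; simp [emb, h2]
    · right; simp [emb, h2]

lemma emb_retr {k : Fin 2} {ρ : Fin s → Fin 4} (h : Pat k ρ) : emb k (retr ρ) = ρ := by
  funext i
  by_cases h2 : ρ i = 0
  · simp [emb, retr, h2]
  · rcases h.2 i with h3 | h3
    · exact absurd h3 h2
    · simp only [emb, retr, h2, if_false]
      rw [if_neg (by simp [Fin.ext_iff]), h3]

lemma retr_ne_zero {k : Fin 2} {ρ : Fin s → Fin 4} (h : Pat k ρ) :
    retr ρ ≠ (fun _ => 0) := by
  intro hc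
  apply h.1
  funext i
  have := congrFun hc i
  simp only [retr] at this
  by_cases h2 : ρ i = 0
  · exact h2
  · rw [if_neg h2] at this
    exact absurd this (by simp [Fin.ext_iff])

lemma not_pat_zero (k : Fin 2) : ¬ Pat k (fun _ : Fin s => (0 : Fin 4)) := fun h => h.1 rfl

lemma pat_disjoint {ρ : Fin s → Fin 4} (h0 : Pat 0 ρ) : ¬ Pat 1 ρ := by
  intro h1
  apply h0.1
  funext i
  rcases h0.2 i with h | h
  · exact h
  · rcases h1.2 i with h' | h'
    · exact h'
    · rw [h] at h'
      exact absurd h' (by simp [Fin.ext_iff])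

/-- the family of functions on the `[4]^s` grid -/
noncomputable def Fam (G : (Fin s → V) → ℝ) (G' : Fin 2 → (Fin s → Fin 2) → (Fin s → V) → ℝ)
    (ρ : Fin s → Fin 4) : (Fin s → V) → ℝ :=
  if Pat 0 ρ then G' 0 (retr ρ)
  else if Pat 1 ρ then G' 1 (retr ρ)
  else if ρ = (fun _ => 0) then G
  else fun _ => 1

lemma prod_Fam {M : Type*} [CommMonoid M] (G : (Fin s → V) → ℝ)
    (G' : Fin 2 → (Fin s → Fin 2) → (Fin s → V) → ℝ)
    (W : (Fin s → Fin 4) → ((Fin s → V) → ℝ) → M)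
    (hW : ∀ ρ, ¬ Pat 0 ρ → ¬ Pat 1 ρ → ρ ≠ (fun _ => 0) → W ρ (fun _ => 1) = 1) :
    ∏ ρ : Fin s → Fin 4, W ρ (Fam G G' ρ)
      = W (fun _ => 0) G * ∏ k : Fin 2,
          ∏ ω ∈ Finset.univ.filter (fun ω : Fin s → Fin 2 => ω ≠ fun _ => 0),
            W (emb k ω) (G' k ω) := by
  classical
  have hz : ((fun _ => 0) : Fin s → Fin 4) ∈ (univ : Finset (Fin s → Fin 4)) := mem_univ _
  rw [← Finset.mul_prod_erase univ _ hz]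
  have hFam0 : Fam G G' (fun _ => 0) = G := by
    rw [Fam, if_neg (not_pat_zero 0), if_neg (not_pat_zero 1), if_pos rfl]
  rw [hFam0]
  congr 1
  rw [← Finset.prod_filter_mul_prod_filter_not (univ.erase (fun _ => 0)) (Pat 0)]
  rw [← Finset.prod_filter_mul_prod_filter_not
    ((univ.erase (fun _ => 0)).filter (fun ρ => ¬ Pat 0 ρ)) (Pat 1)]
  have hrest : ∏ ρ ∈ (((univ.erase (fun _ => 0)).filter (fun ρ => ¬ Pat 0 ρ)).filter
      (fun ρ => ¬ Pat 1 ρ)), W ρ (Fam G G' ρ) = 1 := by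
    refine Finset.prod_eq_one fun ρ hρ => ?_
    simp only [Finset.mem_filter, Finset.mem_erase] at hρ
    obtain ⟨⟨⟨hne, -⟩, h0⟩, h1⟩ := hρ
    rw [Fam, if_neg h0, if_neg h1, if_neg hne]
    exact hW ρ h0 h1 hne
  rw [hrest, mul_one, Fin.prod_univ_two]
  congr 1
  · -- k = 0 part
    refine Finset.prod_nbij' (fun ρ => retr ρ) (fun ω => emb 0 ω) ?_ ?_ ?_ ?_ ?_
    · intro ρ hρ
      simp only [Finset.mem_filter, Finset.mem_erase, Finset.mem_univ, true_and] at hρ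
      simp only [Finset.mem_filter, Finset.mem_univ, true_and]
      exact retr_ne_zero hρ.2
    · intro ω hω
      simp only [Finset.mem_filter, Finset.mem_univ, true_and] at hω
      simp only [Finset.mem_filter, Finset.mem_erase, Finset.mem_univ, true_and, and_true]
      exact ⟨(pat_emb hω).1, pat_emb hω⟩
    · intro ρ hρ
      simp only [Finset.mem_filter, Finset.mem_erase, Finset.mem_univ, true_and] at hρ
      exact emb_retr hρ.2
    · intro ω hω
      exact retr_emb 0 ω
    · intro ρ hρ
      simp only [Finset.mem_filter, Finset.mem_erase, Finset.mem_univ, true_and] at hρ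
      rw [Fam, if_pos hρ.2]
      rw [emb_retr hρ.2]
  · -- k = 1 part
    refine Finset.prod_nbij' (fun ρ => retr ρ) (fun ω => emb 1 ω) ?_ ?_ ?_ ?_ ?_
    · intro ρ hρ
      simp only [Finset.mem_filter, Finset.mem_erase, Finset.mem_univ] at hρ
      obtain ⟨⟨-, h0⟩, h1⟩ := hρ
      simp only [Finset.mem_filter, Finset.mem_univ, true_and]
      exact retr_ne_zero h1
    · intro ω hω
      simp only [Finset.mem_filter, Finset.mem_univ, true_and] at hω
      simp only [Finset.mem_filter, Finset.mem_erase, Finset.mem_univ] at *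
      have hp := pat_emb (k := 1) hω
      exact ⟨⟨⟨hp.1, trivial⟩, fun h0 => pat_disjoint h0 hp⟩, hp⟩
    · intro ρ hρ
      simp only [Finset.mem_filter, Finset.mem_erase, Finset.mem_univ] at hρ
      exact emb_retr hρ.2
    · intro ω hω
      exact retr_emb 1 ω
    · intro ρ hρ
      simp only [Finset.mem_filter, Finset.mem_erase, Finset.mem_univ] at hρ
      obtain ⟨⟨-, h0⟩, h1⟩ := hρ
      rw [Fam, if_neg h0, if_pos h1]
      rw [emb_retr h1]

end appl

section final
variable {V : Type*} [Fintype V] [Nonempty V] {s : ℕ}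

def colEquiv : (Fin s → Fin 4 → V) ≃ ((Fin s → V) × (Fin 2 → Fin s → V)) × (Fin s → V) where
  toFun x := ((fun i => x i 0, fun k i => x i ⟨k.val + 1, by omega⟩), fun i => x i 3)
  invFun p := fun i j =>
    if j = 0 then p.1.1 i else if j = 3 then p.2 i else p.1.2 ⟨min (j.val - 1) 1, by omega⟩ i
  left_inv x := by
    funext i j
    fin_cases j <;> simp [Fin.ext_iff] <;> (intro h; exact absurd h (by decide))
  right_inv p := by
    refine Prod.ext (Prod.ext ?_ ?_) ?_
    · funext i
      simp
    · funext k i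
      fin_cases k <;> simp [Fin.ext_iff] <;> (intro h; exact absurd h (by decide))
    · funext i
      simp

lemma avg_proj (g : ((Fin s → V) × (Fin 2 → Fin s → V)) → ℝ) :
    avg ((Fin s → V) × (Fin 2 → Fin s → V)) g
      = avg (Fin s → Fin 4 → V) (fun x => g ((colEquiv x).1)) := by
  have h1 : avg (Fin s → Fin 4 → V) (fun x => g ((colEquiv x).1))
      = avg (((Fin s → V) × (Fin 2 → Fin s → V)) × (Fin s → V)) (fun p => g p.1) := by
    rw [avg_equiv (colEquiv (V := V) (s := s)).symm]
    refine congrArg _ (funext fun p => ?_)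
    rw [Equiv.apply_symm_apply]
  rw [h1]
  rw [show (avg (((Fin s → V) × (Fin 2 → Fin s → V)) × (Fin s → V)) fun p => g p.1)
      = avg ((Fin s → V) × (Fin 2 → Fin s → V)) (fun a => avg (Fin s → V) (fun _ => g a))
    from avg_prod _]
  simp only [avg_const]

end final


theorem stmt5 (V : Type) [Fintype V] [Nonempty V] (s : ℕ) (hs : 2 ≤ s)
    (G : (Fin s → V) → ℝ) (G' : Fin 2 → (Fin s → Fin 2) → (Fin s → V) → ℝ) :
    /- The average is over `(y, z)` with `y ∈ V^s` and `z k ∈ V^s` for `k ∈ {1,2}`;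
    the projection `π_ω(y, z k)` is `fun i => if ω i = 0 then y i else z k i`
    (recall `1^s` is modelled as `fun _ => (0 : Fin 2)`). -/
    |avg ((Fin s → V) × (Fin 2 → Fin s → V)) fun yz =>
        G yz.1 *
          ∏ k : Fin 2, ∏ ω ∈ Finset.univ.filter (fun ω : Fin s → Fin 2 => ω ≠ fun _ => 0),
            G' k ω fun i => if ω i = 0 then yz.1 i else yz.2 k i|
      ≤ boxNorm V s 4 G *
          ∏ k : Fin 2, ∏ ω ∈ Finset.univ.filter (fun ω : Fin s → Fin 2 => ω ≠ fun _ => 0),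
            boxNorm V s 4 (G' k ω) := by

  classical
  have hint : ∀ x : Fin s → Fin 4 → V,
      G ((colEquiv x).1.1) *
          ∏ k : Fin 2, ∏ ω ∈ Finset.univ.filter (fun ω : Fin s → Fin 2 => ω ≠ fun _ => 0),
            G' k ω (fun i => if ω i = 0 then (colEquiv x).1.1 i else (colEquiv x).1.2 k i)
        = ∏ ρ : Fin s → Fin 4, Fam G G' ρ (fun i => x i (ρ i)) := by
    intro x
    rw [prod_Fam G G' (fun ρ f => f (fun i => x i (ρ i))) (fun ρ _ _ _ => rfl)]
    congr 1
    refine Finset.prod_congr rfl fun k _ => Finset.prod_congr rfl fun ω hω => ?_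
    congr 1
    funext i
    by_cases h : ω i = 0 <;> simp [emb, h, colEquiv]
  have hLHS : (avg ((Fin s → V) × (Fin 2 → Fin s → V)) fun yz =>
        G yz.1 *
          ∏ k : Fin 2, ∏ ω ∈ Finset.univ.filter (fun ω : Fin s → Fin 2 => ω ≠ fun _ => 0),
            G' k ω fun i => if ω i = 0 then yz.1 i else yz.2 k i)
      = GP V s (Fam G G') := by
    rw [avg_proj]
    rw [GP]
    exact congrArg _ (funext fun x => hint x)
  rw [hLHS]
  have hgcs := gcs s (by omega) (Fam G G')
  have hbox : ∀ ρ : Fin s → Fin 4,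
      (Dg V s (Fam G G' ρ)) ^ (((4:ℝ) ^ s)⁻¹) = boxNorm V s 4 (Fam G G' ρ) :=
    fun ρ => (boxNorm_eq _).symm
  rw [Finset.prod_congr rfl (fun ρ _ => hbox ρ)] at hgcs
  refine hgcs.trans (le_of_eq ?_)
  exact prod_Fam G G' (fun ρ f => boxNorm V s 4 f) (fun ρ _ _ _ => boxNorm_one)
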